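/- Define φ : ℝ² → ℝ² by φ(x,y) = ( x/√(1+x²+y²), y/√(1+x²+y²) ), a diffeomorphism onto the open unit disk. Then for every (x,y) ∈ ℝ²: (1) the determinant of the derivative of φ at (x,y) equals (1+x²+y²)^{−2}; and (2) for every c ∈ ℝ, g_c(x,y) · (1+x²+y²)^{−2} = h_c(φ(x,y)), where g_c(x,y) = (1/4)(1+x²+y²)((c+1)(x²+y²)+c−1) and h_c(s,t) = (1/2)(s²+t²−(1−c)/2). (Hence the pushforward of π_c = g_c ∂_x∧∂_y under φ is h_c ∂_s∧∂_t.) -/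

import Mathlib

/-- The map `φ(x,y) = (x/√(1+x²+y²), y/√(1+x²+y²))` from the plane onto the
open unit disk. -/
noncomputable def phi (p : ℝ × ℝ) : ℝ × ℝ :=
  (p.1 / Real.sqrt (1 + p.1 ^ 2 + p.2 ^ 2), p.2 / Real.sqrt (1 + p.1 ^ 2 + p.2 ^ 2))

/-- The coefficient of the Poisson structure `π_c` in the stereographic chart. -/
noncomputable def gPi (c : ℝ) (p : ℝ × ℝ) : ℝ :=
  (1 / 4) * (1 + p.1 ^ 2 + p.2 ^ 2) * ((c + 1) * (p.1 ^ 2 + p.2 ^ 2) + c - 1)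

/-- The coefficient of the necklace Poisson structure in the disk coordinates. -/
noncomputable def hPi (c : ℝ) (q : ℝ × ℝ) : ℝ :=
  (1 / 2) * (q.1 ^ 2 + q.2 ^ 2 - (1 - c) / 2)

/-- Determinant of a continuous linear endomorphism of `ℝ × ℝ` in terms of its
values on the standard basis. -/
lemma clm_det_eq (L : ℝ × ℝ →L[ℝ] ℝ × ℝ) :
    L.det = (L (1, 0)).1 * (L (0, 1)).2 - (L (0, 1)).1 * (L (1, 0)).2 := by
  have h : L.det = LinearMap.det (L : ℝ × ℝ →ₗ[ℝ] ℝ × ℝ) := rfl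
  rw [h, ← LinearMap.det_toMatrix (Module.Basis.finTwoProd ℝ), Matrix.det_fin_two]
  simp [LinearMap.toMatrix_apply, Module.Basis.finTwoProd_zero, Module.Basis.finTwoProd_one,
    Module.Basis.coe_finTwoProd_repr]

/-- The disk coordinates transform `π_c = g_c ∂_x∧∂_y` into `h_c ∂_s∧∂_t`:
(1) the Jacobian determinant of `φ` at `(x,y)` is `(1+x²+y²)⁻²`, and
(2) `g_c(x,y)·(1+x²+y²)⁻² = h_c(φ(x,y))`. -/
theorem pushforward_pi_c_to_disk (p : ℝ × ℝ) :
    (fderiv ℝ phi p).det = ((1 + p.1 ^ 2 + p.2 ^ 2) ^ 2)⁻¹ ∧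
    ∀ c : ℝ, gPi c p * ((1 + p.1 ^ 2 + p.2 ^ 2) ^ 2)⁻¹ = hPi c (phi p) := by
  obtain ⟨x, y⟩ := p
  simp only
  have hr : (0 : ℝ) < 1 + x ^ 2 + y ^ 2 := by positivity
  set s : ℝ := Real.sqrt (1 + x ^ 2 + y ^ 2) with hs_def
  have hs : 0 < s := Real.sqrt_pos.2 hr
  have hs2 : s ^ 2 = 1 + x ^ 2 + y ^ 2 := Real.sq_sqrt hr.le

  -- derivative of the inner quadratic
  have hq : HasFDerivAt (fun q : ℝ × ℝ => 1 + q.1 ^ 2 + q.2 ^ 2)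
      (((2 * x) • ContinuousLinearMap.fst ℝ ℝ ℝ) +
        ((2 * y) • ContinuousLinearMap.snd ℝ ℝ ℝ)) (x, y) := by
    have h1 : HasFDerivAt (fun q : ℝ × ℝ => q.1 * q.1)
        ((2 * x) • ContinuousLinearMap.fst ℝ ℝ ℝ) (x, y) := by
      have := (hasFDerivAt_fst (𝕜 := ℝ) (p := ((x, y) : ℝ × ℝ))).mul
        (hasFDerivAt_fst (𝕜 := ℝ) (p := ((x, y) : ℝ × ℝ)))
      refine this.congr_fderiv ?_
      simp [two_mul, add_smul]
    have h2 : HasFDerivAt (fun q : ℝ × ℝ => q.2 * q.2)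
        ((2 * y) • ContinuousLinearMap.snd ℝ ℝ ℝ) (x, y) := by
      have := (hasFDerivAt_snd (𝕜 := ℝ) (p := ((x, y) : ℝ × ℝ))).mul
        (hasFDerivAt_snd (𝕜 := ℝ) (p := ((x, y) : ℝ × ℝ)))
      refine this.congr_fderiv ?_
      simp [two_mul, add_smul]
    have := (h1.const_add 1).add h2
    refine HasFDerivAt.congr_of_eventuallyEq this (Filter.Eventually.of_forall fun q => ?_)
    simp only [Pi.add_apply]
    ring
  -- derivative of the square root of the quadratic
  have hu : HasFDerivAt (fun q : ℝ × ℝ => Real.sqrt (1 + q.1 ^ 2 + q.2 ^ 2))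
      ((1 / (2 * s)) • (((2 * x) • ContinuousLinearMap.fst ℝ ℝ ℝ) +
        ((2 * y) • ContinuousLinearMap.snd ℝ ℝ ℝ))) (x, y) := by
    have hderiv : HasDerivAt Real.sqrt (1 / (2 * s)) (1 + x ^ 2 + y ^ 2) :=
      Real.hasDerivAt_sqrt (ne_of_gt hr)
    have := HasDerivAt.comp_hasFDerivAt ((x, y) : ℝ × ℝ) hderiv hq
    exact this
  have hune : Real.sqrt (1 + x ^ 2 + y ^ 2) ≠ 0 := ne_of_gt hs
  -- derivative of the reciprocal of the square root
  have hv : HasFDerivAt (fun q : ℝ × ℝ => (Real.sqrt (1 + q.1 ^ 2 + q.2 ^ 2))⁻¹)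
      ((-(s ^ 2)⁻¹) • ((1 / (2 * s)) • (((2 * x) • ContinuousLinearMap.fst ℝ ℝ ℝ) +
        ((2 * y) • ContinuousLinearMap.snd ℝ ℝ ℝ)))) (x, y) := by
    have hinv : HasDerivAt (fun t : ℝ => t⁻¹) (-(s ^ 2)⁻¹) s := by
      simpa using hasDerivAt_inv (ne_of_gt hs)
    have := HasDerivAt.comp_hasFDerivAt ((x, y) : ℝ × ℝ) hinv hu
    exact this
  have hf1 := (hasFDerivAt_fst (𝕜 := ℝ) (p := ((x, y) : ℝ × ℝ))).mul hv
  have hf2 := (hasFDerivAt_snd (𝕜 := ℝ) (p := ((x, y) : ℝ × ℝ))).mul hv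
  have hphi : HasFDerivAt (fun q : ℝ × ℝ =>
      (q.1 * (Real.sqrt (1 + q.1 ^ 2 + q.2 ^ 2))⁻¹,
       q.2 * (Real.sqrt (1 + q.1 ^ 2 + q.2 ^ 2))⁻¹)) _ (x, y) := hf1.prodMk hf2
  have hephi : phi = fun q : ℝ × ℝ =>
      (q.1 * (Real.sqrt (1 + q.1 ^ 2 + q.2 ^ 2))⁻¹,
       q.2 * (Real.sqrt (1 + q.1 ^ 2 + q.2 ^ 2))⁻¹) := by
    funext q
    simp [phi, div_eq_mul_inv]
  constructor
  · rw [hephi, hphi.fderiv, clm_det_eq]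
    simp only [ContinuousLinearMap.prod_apply, ContinuousLinearMap.smul_apply,
      ContinuousLinearMap.add_apply, ContinuousLinearMap.neg_apply,
      ContinuousLinearMap.coe_fst', ContinuousLinearMap.coe_snd', smul_eq_mul]
    rw [← hs_def]
    rw [← hs2]
    have hsne : s ≠ 0 := ne_of_gt hs
    field_simp
    linear_combination (s ^ 2) * hs2
  · intro c
    have h1 : (phi (x, y)).1 = x / s := rfl
    have h2 : (phi (x, y)).2 = y / s := rfl
    rw [hPi, h1, h2, gPi]
    simp only [div_pow, hs2]
    field_simp
    ring
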